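/- Let R be the time reversal R(φ)(s) = φ(t−s) − φ(t) on C([0,t];ℝ). Then for every real z, T_z ∘ R ∘ T_z = R, and consequently R ∘ T_z = T_{−z} ∘ R. -/

import Mathlib

open MeasureTheory Real

noncomputable def pathA (φ : ℝ → ℝ) (s : ℝ) : ℝ := ∫ u in (0:ℝ)..s, Real.exp (2 * φ u)

noncomputable def pathT (t z : ℝ) (φ : ℝ → ℝ) (s : ℝ) : ℝ :=
  φ s - Real.log (1 + (pathA φ s / pathA φ t) * (Real.exp z - 1))

noncomputable def pathR (t : ℝ) (φ : ℝ → ℝ) (s : ℝ) : ℝ := φ (t - s) - φ t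

lemma exp2_cont {φ : ℝ → ℝ} (hφ : Continuous φ) :
    Continuous fun u => Real.exp (2 * φ u) :=
  Real.continuous_exp.comp (continuous_const.mul hφ)

lemma pathA_hasDerivAt {φ : ℝ → ℝ} (hφ : Continuous φ) (x : ℝ) :
    HasDerivAt (pathA φ) (Real.exp (2 * φ x)) x :=
  ((exp2_cont hφ).integral_hasStrictDerivAt 0 x).hasDerivAt

lemma pathA_continuous {φ : ℝ → ℝ} (hφ : Continuous φ) : Continuous (pathA φ) :=
  continuous_iff_continuousAt.2 fun x => (pathA_hasDerivAt hφ x).continuousAt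

lemma pathA_zero (φ : ℝ → ℝ) : pathA φ 0 = 0 := intervalIntegral.integral_same

lemma pathA_nonneg (φ : ℝ → ℝ) {u : ℝ} (hu : 0 ≤ u) : 0 ≤ pathA φ u :=
  intervalIntegral.integral_nonneg hu fun x _ => (Real.exp_pos _).le

lemma pathA_pos {φ : ℝ → ℝ} (hφ : Continuous φ) {t : ℝ} (ht : 0 < t) : 0 < pathA φ t :=
  intervalIntegral.intervalIntegral_pos_of_pos
    ((exp2_cont hφ).intervalIntegrable (μ := volume) 0 t) (fun _ => Real.exp_pos _) ht

lemma pathA_mono {φ : ℝ → ℝ} (hφ : Continuous φ) {a b : ℝ} (hab : a ≤ b) :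
    pathA φ a ≤ pathA φ b := by
  have h := intervalIntegral.integral_interval_sub_left
    ((exp2_cont hφ).intervalIntegrable (μ := volume) 0 b)
    ((exp2_cont hφ).intervalIntegrable (μ := volume) 0 a)
  have h2 : 0 ≤ ∫ u in a..b, Real.exp (2 * φ u) :=
    intervalIntegral.integral_nonneg hab fun x _ => (Real.exp_pos _).le
  have : 0 ≤ pathA φ b - pathA φ a := by rw [pathA, pathA, h]; exact h2
  linarith

lemma D_pos {φ : ℝ → ℝ} (hφ : Continuous φ) {t : ℝ} (ht : 0 < t) (z : ℝ) {u : ℝ}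
    (hu : 0 ≤ u) (hut : u ≤ t) :
    0 < 1 + pathA φ u / pathA φ t * (Real.exp z - 1) := by
  have hK := pathA_pos hφ ht
  have h0 : 0 ≤ pathA φ u / pathA φ t := div_nonneg (pathA_nonneg φ hu) hK.le
  have h1 : pathA φ u / pathA φ t ≤ 1 := by
    rw [div_le_one hK]; exact pathA_mono hφ hut
  rcases le_or_gt 1 (Real.exp z) with h | h
  · nlinarith [mul_nonneg h0 (sub_nonneg.2 h)]
  · nlinarith [mul_nonneg (sub_nonneg.2 h1) (sub_nonneg.2 h.le), Real.exp_pos z]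

lemma pathT_continuousOn {φ : ℝ → ℝ} (hφ : Continuous φ) {t : ℝ} (ht : 0 < t) (z : ℝ) :
    ContinuousOn (pathT t z φ) (Set.Icc 0 t) := by
  apply hφ.continuousOn.sub
  apply ContinuousOn.log
  · exact (continuous_const.add
      (((pathA_continuous hφ).div_const _).mul continuous_const)).continuousOn
  · intro u hu
    exact (D_pos hφ ht z hu.1 hu.2).ne'

lemma exp2_pathT_continuousOn {φ : ℝ → ℝ} (hφ : Continuous φ) {t : ℝ} (ht : 0 < t) (z : ℝ) :
    ContinuousOn (fun u => Real.exp (2 * pathT t z φ u)) (Set.Icc 0 t) :=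
  Real.continuous_exp.comp_continuousOn
    (continuousOn_const.mul (pathT_continuousOn hφ ht z))

lemma pathA_pathT {φ : ℝ → ℝ} (hφ : Continuous φ) {t : ℝ} (ht : 0 < t) (z : ℝ)
    {s : ℝ} (hs : 0 ≤ s) (hst : s ≤ t) :
    pathA (pathT t z φ) s
      = pathA φ s / (1 + (pathA φ s / pathA φ t) * (Real.exp z - 1)) := by
  have hK : 0 < pathA φ t := pathA_pos hφ ht
  have hderiv : ∀ x ∈ Set.uIcc 0 s,
      HasDerivAt (fun u => pathA φ u / (1 + pathA φ u / pathA φ t * (Real.exp z - 1)))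
        (Real.exp (2 * pathT t z φ x)) x := by
    intro x hx
    rw [Set.uIcc_of_le hs] at hx
    have hdx : 0 < 1 + pathA φ x / pathA φ t * (Real.exp z - 1) :=
      D_pos hφ ht z hx.1 (hx.2.trans hst)
    have hA := pathA_hasDerivAt hφ x
    have hDder : HasDerivAt (fun u => 1 + pathA φ u / pathA φ t * (Real.exp z - 1))
        (Real.exp (2 * φ x) / pathA φ t * (Real.exp z - 1)) x :=
      ((hA.div_const (pathA φ t)).mul_const _).const_add 1
    have hq := hA.div hDder hdx.ne'
    have hET : Real.exp (2 * pathT t z φ x)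
        = Real.exp (2 * φ x) / (1 + pathA φ x / pathA φ t * (Real.exp z - 1)) ^ 2 := by
      rw [pathT, mul_sub, Real.exp_sub]
      congr 1
      rw [show (2:ℝ) * Real.log (1 + pathA φ x / pathA φ t * (Real.exp z - 1))
          = Real.log ((1 + pathA φ x / pathA φ t * (Real.exp z - 1)) ^ 2) by
        rw [Real.log_pow]; norm_num]
      exact Real.exp_log (pow_pos hdx 2)
    have hnum : Real.exp (2 * φ x) * (1 + pathA φ x / pathA φ t * (Real.exp z - 1))
        - pathA φ x * (Real.exp (2 * φ x) / pathA φ t * (Real.exp z - 1))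
        = Real.exp (2 * φ x) := by
      field_simp
      ring
    rw [hET, ← hnum]
    exact hq
  have hint : IntervalIntegrable (fun u => Real.exp (2 * pathT t z φ u)) volume 0 s := by
    apply ContinuousOn.intervalIntegrable
    rw [Set.uIcc_of_le hs]
    exact (exp2_pathT_continuousOn hφ ht z).mono (Set.Icc_subset_Icc le_rfl hst)
  have hFT := intervalIntegral.integral_eq_sub_of_hasDerivAt hderiv hint
  have hmain : pathA (pathT t z φ) s
      = pathA φ s / (1 + pathA φ s / pathA φ t * (Real.exp z - 1))
        - pathA φ 0 / (1 + pathA φ 0 / pathA φ t * (Real.exp z - 1)) := hFT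
  rw [hmain, pathA_zero, zero_div, sub_zero]

lemma pathA_pathR {f : ℝ → ℝ} {t : ℝ}
    (hf : ContinuousOn (fun u => Real.exp (2 * f u)) (Set.Icc 0 t))
    {s : ℝ} (hs : 0 ≤ s) (hst : s ≤ t) :
    pathA (pathR t f) s = Real.exp (-(2 * f t)) * (pathA f t - pathA f (t - s)) := by
  have h0t : (0 : ℝ) ≤ t := hs.trans hst
  have hts0 : 0 ≤ t - s := by linarith
  have hi1 : IntervalIntegrable (fun v => Real.exp (2 * f v)) volume 0 t :=
    hf.intervalIntegrable_of_Icc h0t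
  have hi2 : IntervalIntegrable (fun v => Real.exp (2 * f v)) volume 0 (t - s) :=
    (hf.mono (Set.Icc_subset_Icc le_rfl (by linarith))).intervalIntegrable_of_Icc hts0
  have key : pathA f t - pathA f (t - s) = ∫ v in (t - s)..t, Real.exp (2 * f v) := by
    rw [pathA, pathA, intervalIntegral.integral_interval_sub_left hi1 hi2]
  have step1 : pathA (pathR t f) s
      = ∫ u in (0:ℝ)..s, Real.exp (-(2 * f t)) * Real.exp (2 * f (t - u)) := by
    rw [pathA]
    congr 1
    funext u
    rw [pathR, ← Real.exp_add]
    congr 1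
    ring
  rw [step1, intervalIntegral.integral_const_mul, key]
  congr 1
  have hcv := intervalIntegral.integral_comp_sub_left
    (a := 0) (b := s) (fun v => Real.exp (2 * f v)) t
  simp only [sub_zero] at hcv
  exact hcv

lemma alg1 {K a ez d : ℝ} (hK : K ≠ 0) (hez : ez ≠ 0) (hd : d ≠ 0)
    (hrel : d * K = K + a * (ez - 1)) :
    1 + (K / ez - a / d) / (K / ez) * (ez - 1) = ez / d := by
  field_simp
  linear_combination ez * hrel

theorem stmt4 (t : ℝ) (ht : 0 < t) (z : ℝ) (φ : ℝ → ℝ) (hφ : Continuous φ)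
    (s : ℝ) (hs : 0 ≤ s) (hst : s ≤ t) :
    pathT t z (pathR t (pathT t z φ)) s = pathR t φ s ∧
    pathR t (pathT t z φ) s = pathT t (-z) (pathR t φ) s := by
  have hK : 0 < pathA φ t := pathA_pos hφ ht
  have hts0 : 0 ≤ t - s := by linarith
  have htst : t - s ≤ t := by linarith
  have hd : 0 < 1 + pathA φ (t - s) / pathA φ t * (Real.exp z - 1) := D_pos hφ ht z hts0 htst
  have hez : Real.exp z ≠ 0 := Real.exp_ne_zero z
  have hψt : pathA (pathT t z φ) t = pathA φ t / Real.exp z := by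
    rw [pathA_pathT hφ ht z ht.le le_rfl, div_self hK.ne', one_mul]
    congr 1
    ring
  have hψts : pathA (pathT t z φ) (t - s)
      = pathA φ (t - s) / (1 + pathA φ (t - s) / pathA φ t * (Real.exp z - 1)) :=
    pathA_pathT hφ ht z hts0 htst
  have hψcont := exp2_pathT_continuousOn hφ ht z
  have hρs := pathA_pathR hψcont hs hst
  have hρt := pathA_pathR hψcont ht.le le_rfl
  rw [sub_self, pathA_zero] at hρt
  have hE : Real.exp (-(2 * pathT t z φ t)) ≠ 0 := Real.exp_ne_zero _
  have hratio : pathA (pathR t (pathT t z φ)) s / pathA (pathR t (pathT t z φ)) t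
      = (pathA (pathT t z φ) t - pathA (pathT t z φ) (t - s)) / pathA (pathT t z φ) t := by
    rw [hρs, hρt, sub_zero, mul_div_mul_left _ _ hE]
  have harg1 : 1 + pathA (pathR t (pathT t z φ)) s / pathA (pathR t (pathT t z φ)) t
        * (Real.exp z - 1)
      = Real.exp z / (1 + pathA φ (t - s) / pathA φ t * (Real.exp z - 1)) := by
    have hrel : (1 + pathA φ (t - s) / pathA φ t * (Real.exp z - 1)) * pathA φ t
        = pathA φ t + pathA φ (t - s) * (Real.exp z - 1) := by
      field_simp
    rw [hratio, hψt, hψts]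
    exact alg1 hK.ne' hez hd.ne' hrel
  have hψtval : pathT t z φ t = φ t - z := by
    rw [pathT, div_self hK.ne', one_mul,
      show (1:ℝ) + (Real.exp z - 1) = Real.exp z by ring, Real.log_exp]
  have hψtsval : pathT t z φ (t - s)
      = φ (t - s) - Real.log (1 + pathA φ (t - s) / pathA φ t * (Real.exp z - 1)) := rfl
  constructor
  · rw [pathT, harg1, pathR, pathR, hψtsval, hψtval,
      Real.log_div hez hd.ne', Real.log_exp]
    ring
  · have hRs := pathA_pathR (t := t) (f := φ) (exp2_cont hφ).continuousOn hs hst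
    have hRt := pathA_pathR (t := t) (f := φ) (exp2_cont hφ).continuousOn ht.le le_rfl
    rw [sub_self, pathA_zero] at hRt
    have hE2 : Real.exp (-(2 * φ t)) ≠ 0 := Real.exp_ne_zero _
    have hratio2 : pathA (pathR t φ) s / pathA (pathR t φ) t
        = (pathA φ t - pathA φ (t - s)) / pathA φ t := by
      rw [hRs, hRt, sub_zero, mul_div_mul_left _ _ hE2]
    have harg2 : 1 + pathA (pathR t φ) s / pathA (pathR t φ) t * (Real.exp (-z) - 1)
        = (1 + pathA φ (t - s) / pathA φ t * (Real.exp z - 1)) * Real.exp (-z) := by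
      rw [hratio2, Real.exp_neg]
      field_simp
      ring
    rw [pathT, harg2, Real.log_mul hd.ne' (Real.exp_ne_zero _), Real.log_exp, pathR, pathR,
      hψtsval, hψtval]
    ring
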